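/- Let G = Z_{p^μ} ⋊ (Z₃ × Z₃) = ⟨x⟩ ⋊ (⟨a⟩ × ⟨b₀⟩) with p > 3 prime, where x^a = x^{r²} and x^{b₀} = x^r for r a primitive cube root of unity modulo p^μ, and set b = x b₀. Then the element ab has order 3p^μ. -/

import Mathlib

open scoped Pointwise

/-- In `G = Z_{p^μ} ⋊ (Z₃ × Z₃) = ⟨x⟩ ⋊ (⟨a⟩ × ⟨b₀⟩)` with `p > 3` prime,
`x^a = x^{r²}`, `x^{b₀} = x^r` for `r` a primitive cube root of unity mod `p^μ`,
and `b = x b₀`, the element `ab` has order `3 p^μ`. -/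
theorem stmt_17 {G : Type*} [Group G] (p μ r : ℕ) (hp : p.Prime) (hp3 : 3 < p)
    (x a b₀ : G)
    (hx : orderOf x = p ^ μ) (ha : orderOf a = 3) (hb₀ : orderOf b₀ = 3)
    (hab₀ : a * b₀ = b₀ * a)
    (hr3 : r ^ 3 ≡ 1 [MOD p ^ μ]) (hr1 : ¬ r ≡ 1 [MOD p])
    (hxa : a⁻¹ * x * a = x ^ (r ^ 2)) (hxb : b₀⁻¹ * x * b₀ = x ^ r)
    (hcard : Nat.card G = 9 * p ^ μ)
    (hgen : Subgroup.closure ({x, a, b₀} : Set G) = ⊤) :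
    orderOf (a * (x * b₀)) = 3 * p ^ μ := by
  have hppos : 0 < p ^ μ := Nat.pow_pos (n := μ) hp.pos
  -- powers conjugation lemmas
  have hxak : ∀ k : ℕ, x ^ k * a = a * x ^ (r ^ 2 * k) := by
    intro k
    have h1 : (a⁻¹ * x * a) ^ k = a⁻¹ * x ^ k * a := by
      simpa using conj_pow (i := k) (a := a⁻¹) (b := x)
    have h2 : a⁻¹ * x ^ k * a = x ^ (r ^ 2 * k) := by
      rw [← h1, hxa, ← pow_mul]
    calc x ^ k * a = a * (a⁻¹ * x ^ k * a) := by group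
      _ = a * x ^ (r ^ 2 * k) := by rw [h2]
  have hxbk : ∀ k : ℕ, x ^ k * b₀ = b₀ * x ^ (r * k) := by
    intro k
    have h1 : (b₀⁻¹ * x * b₀) ^ k = b₀⁻¹ * x ^ k * b₀ := by
      simpa using conj_pow (i := k) (a := b₀⁻¹) (b := x)
    have h2 : b₀⁻¹ * x ^ k * b₀ = x ^ (r * k) := by
      rw [← h1, hxb, ← pow_mul]
    calc x ^ k * b₀ = b₀ * (b₀⁻¹ * x ^ k * b₀) := by group
      _ = b₀ * x ^ (r * k) := by rw [h2]
  have hxa' : x * a = a * x ^ (r ^ 2) := by simpa using hxak 1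
  have hxb' : x * b₀ = b₀ * x ^ r := by simpa using hxbk 1
  have hr3x : x ^ (r ^ 3) = x := by
    have : x ^ (r ^ 3) = x ^ 1 := by
      rw [pow_eq_pow_iff_modEq, hx]; exact hr3
    simpa using this
  -- t := a * b₀ commutes with x
  have hcomm : Commute (a * b₀) x := by
    have : x * (a * b₀) = (a * b₀) * x := by
      calc x * (a * b₀) = (x * a) * b₀ := by group
        _ = a * (x ^ (r ^ 2) * b₀) := by rw [hxa']; group
        _ = a * (b₀ * x ^ (r * r ^ 2)) := by rw [hxbk (r ^ 2)]
        _ = (a * b₀) * x ^ (r ^ 3) := by rw [show r * r ^ 2 = r ^ 3 by ring]; group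
        _ = (a * b₀) * x := by rw [hr3x]
    exact this.symm
  -- coprimality of r with p^μ
  have hco_pr : Nat.Coprime (p ^ μ) r := by
    have h3 : Nat.Coprime (p ^ μ) (r ^ 3) := by
      unfold Nat.Coprime
      calc Nat.gcd (p ^ μ) (r ^ 3) = Nat.gcd (r ^ 3 % p ^ μ) (p ^ μ) := Nat.gcd_rec _ _
        _ = Nat.gcd (1 % p ^ μ) (p ^ μ) := by rw [hr3]
        _ = Nat.gcd (p ^ μ) 1 := (Nat.gcd_rec _ _).symm
        _ = 1 := Nat.gcd_one_right _
    exact (Nat.coprime_pow_right_iff (by norm_num) _ _).mp h3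
  have hy : orderOf (x ^ r) = p ^ μ := by
    rw [Nat.Coprime.orderOf_pow (by rw [hx]; exact hco_pr), hx]
  -- order of a * b₀ is 3
  have ha3 : a ^ 3 = 1 := by rw [← ha]; exact pow_orderOf_eq_one a
  have hb3 : b₀ ^ 3 = 1 := by rw [← hb₀]; exact pow_orderOf_eq_one b₀
  have ht3 : (a * b₀) ^ 3 = 1 := by
    rw [Commute.mul_pow hab₀, ha3, hb3, one_mul]
  have htne : a * b₀ ≠ 1 := by
    intro h1
    -- then b₀ = a⁻¹ and G would be generated by x and a, too small
    have hb₀a : b₀ = a⁻¹ := by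
      rw [eq_inv_iff_mul_eq_one, ← hab₀]; exact h1
    have hGfin : Finite G := by
      refine Nat.finite_of_card_ne_zero ?_
      rw [hcard]; positivity
    set N := Subgroup.zpowers x with hN
    -- N is normal
    have haa : a⁻¹ = a * a := by
      refine inv_eq_of_mul_eq_one_right ?_
      have : a * (a * a) = a ^ 3 := by simp [pow_succ, mul_assoc]
      rw [this, ha3]
    have hbb : b₀⁻¹ = b₀ * b₀ := by
      refine inv_eq_of_mul_eq_one_right ?_
      have : b₀ * (b₀ * b₀) = b₀ ^ 3 := by simp [pow_succ, mul_assoc]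
      rw [this, hb3]
    have hax : a * x * a⁻¹ = x ^ (r ^ 2 * (r ^ 2 * 1)) := by
      have e : x * (a * a) = a * a * x ^ (r ^ 2 * (r ^ 2 * 1)) := by
        calc x * (a * a) = (x * a) * a := by group
          _ = a * (x ^ (r ^ 2) * a) := by rw [hxa']; group
          _ = a * (a * x ^ (r ^ 2 * r ^ 2)) := by
              rw [show x ^ (r^2) * a = a * x ^ (r^2 * r^2) by simpa using hxak (r ^ 2)]
          _ = a * a * x ^ (r ^ 2 * (r ^ 2 * 1)) := by rw [mul_one]; group
      rw [← haa] at e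
      calc a * x * a⁻¹ = a * (x * a⁻¹) := by group
        _ = a * (a⁻¹ * x ^ (r ^ 2 * (r ^ 2 * 1))) := by rw [e]
        _ = x ^ (r ^ 2 * (r ^ 2 * 1)) := by group
    have hbx : b₀ * x * b₀⁻¹ = x ^ (r * (r * 1)) := by
      have e : x * (b₀ * b₀) = b₀ * b₀ * x ^ (r * (r * 1)) := by
        calc x * (b₀ * b₀) = (x * b₀) * b₀ := by group
          _ = b₀ * (x ^ r * b₀) := by rw [hxb']; group
          _ = b₀ * (b₀ * x ^ (r * r)) := by rw [hxbk r]
          _ = b₀ * b₀ * x ^ (r * (r * 1)) := by rw [mul_one]; group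
      rw [← hbb] at e
      calc b₀ * x * b₀⁻¹ = b₀ * (x * b₀⁻¹) := by group
        _ = b₀ * (b₀⁻¹ * x ^ (r * (r * 1))) := by rw [e]
        _ = x ^ (r * (r * 1)) := by group
    have hNnorm : N.Normal := by
      rw [← Subgroup.normalizer_eq_top_iff]
      refine le_antisymm le_top ?_
      rw [← hgen]
      refine (Subgroup.closure_le _).mpr ?_
      intro g hg
      have hmem : ∀ (g : G), g * x * g⁻¹ ∈ N → g ∈ Subgroup.normalizer (N : Set G) := by
        intro g hgx
        apply Subgroup.mem_normalizer_fintype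
        intro n hn
        obtain ⟨k, rfl⟩ := Subgroup.mem_zpowers_iff.mp hn
        have : g * x ^ k * g⁻¹ = (g * x * g⁻¹) ^ k := by rw [conj_zpow]
        rw [this]
        exact Subgroup.zpow_mem _ hgx k
      rcases hg with rfl | rfl | rfl
      · refine hmem _ ?_
        have e : g * g * g⁻¹ = g := by group
        rw [e]; exact Subgroup.mem_zpowers g
      · exact hmem _ (hax ▸ Subgroup.pow_mem _ (Subgroup.mem_zpowers x) _)
      · exact hmem _ (hbx ▸ Subgroup.pow_mem _ (Subgroup.mem_zpowers x) _)
    haveI := hNnorm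
    set A := Subgroup.zpowers a with hA
    have htop : A ⊔ N = ⊤ := by
      refine le_antisymm le_top ?_
      rw [← hgen]
      refine (Subgroup.closure_le _).mpr ?_
      intro g hg
      rcases hg with rfl | rfl | rfl
      · exact Subgroup.mem_sup_right (Subgroup.mem_zpowers g)
      · exact Subgroup.mem_sup_left (Subgroup.mem_zpowers g)
      · rw [hb₀a]
        exact Subgroup.mem_sup_left (Subgroup.inv_mem _ (Subgroup.mem_zpowers a))
    have hset : ((A ⊔ N : Subgroup G) : Set G) = (A : Set G) * (N : Set G) :=
      Subgroup.mul_normal A N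
    have hcardle : Nat.card G ≤ 3 * p ^ μ := by
      have h1 : Nat.card G = Nat.card (A ⊔ N : Subgroup G) := by
        rw [htop, Subgroup.card_top]
      have h2 : Nat.card (A ⊔ N : Subgroup G) ≤ Nat.card A * Nat.card N := by
        have := Set.natCard_mul_le (s := (A : Set G)) (t := (N : Set G))
        rw [← hset] at this
        simpa using this
      have h3 : Nat.card A = 3 := by rw [hA, Nat.card_zpowers, ha]
      have h4 : Nat.card N = p ^ μ := by rw [hN, Nat.card_zpowers, hx]
      rw [h3, h4] at h2
      omega
    rw [hcard] at hcardle
    omega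
  have ht : orderOf (a * b₀) = 3 := by
    have hdvd : orderOf (a * b₀) ∣ 3 := orderOf_dvd_of_pow_eq_one ht3
    rcases (Nat.prime_three.eq_one_or_self_of_dvd _ hdvd) with h | h
    · exact absurd (orderOf_eq_one_iff.mp h) htne
    · exact h
  -- main computation
  have hco3 : Nat.Coprime 3 (p ^ μ) :=
    Nat.Coprime.pow_right μ ((Nat.coprime_primes Nat.prime_three hp).mpr (by omega))
  calc orderOf (a * (x * b₀)) = orderOf ((a * b₀) * x ^ r) := by
        rw [hxb']; rw [mul_assoc]
    _ = orderOf (a * b₀) * orderOf (x ^ r) := by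
        refine Commute.orderOf_mul_eq_mul_orderOf_of_coprime (hcomm.pow_right r) ?_
        rw [ht, hy]; exact hco3
    _ = 3 * p ^ μ := by rw [ht, hy]
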